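/- Let D be a noncommutative division ring containing a self-invariant maximal subfield K. Then D admits at least three pairwise distinct self-invariant maximal subfields. -/
import Mathlib

/-- `K` is a self-invariant maximal subfield of the division ring `D`: it is commutative,
it is its own centralizer, and its normalizer in `D*` together with `0` equals `K`. -/
def IsSelfInvMaxSubfield {D : Type*} [DivisionRing D] (K : Subfield D) : Prop :=
  (∀ x ∈ K, ∀ y ∈ K, x * y = y * x) ∧
  (∀ d : D, (∀ x ∈ K, d * x = x * d) → d ∈ K) ∧
  (∀ d : D, d ∈ K ↔ d = 0 ∨ (d ≠ 0 ∧ ∀ k ∈ K, d * k * d⁻¹ ∈ K))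

section Aux

variable {D : Type*} [DivisionRing D]

/-- The conjugate subfield `c K c⁻¹`, described as `{y | c⁻¹ * y * c ∈ K}`. -/
def conjSubfield (K : Subfield D) (c : D) (hc : c ≠ 0) : Subfield D where
  carrier := {y | c⁻¹ * y * c ∈ K}
  mul_mem' {x y} hx hy := by
    have h : c⁻¹ * (x * y) * c = (c⁻¹ * x * c) * (c⁻¹ * y * c) := by
      simp [mul_assoc, inv_mul_cancel_left₀ hc, mul_inv_cancel_left₀ hc,
        mul_inv_cancel₀ hc, inv_mul_cancel₀ hc]
    show c⁻¹ * (x * y) * c ∈ K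
    rw [h]
    exact mul_mem (show c⁻¹ * x * c ∈ K from hx) (show c⁻¹ * y * c ∈ K from hy)
  one_mem' := by
    show c⁻¹ * 1 * c ∈ K
    rw [mul_one, inv_mul_cancel₀ hc]
    exact one_mem K
  add_mem' {x y} hx hy := by
    have h : c⁻¹ * (x + y) * c = (c⁻¹ * x * c) + (c⁻¹ * y * c) := by
      rw [mul_add, add_mul]
    show c⁻¹ * (x + y) * c ∈ K
    rw [h]
    exact add_mem (show c⁻¹ * x * c ∈ K from hx) (show c⁻¹ * y * c ∈ K from hy)
  zero_mem' := by
    show c⁻¹ * 0 * c ∈ K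
    rw [mul_zero, zero_mul]
    exact zero_mem K
  neg_mem' {x} hx := by
    have h : c⁻¹ * (-x) * c = -(c⁻¹ * x * c) := by
      rw [mul_neg, neg_mul]
    show c⁻¹ * (-x) * c ∈ K
    rw [h]
    exact neg_mem (show c⁻¹ * x * c ∈ K from hx)
  inv_mem' x hx := by
    show c⁻¹ * x⁻¹ * c ∈ K
    have h : c⁻¹ * x⁻¹ * c = (c⁻¹ * x * c)⁻¹ := by
      rw [mul_inv_rev, mul_inv_rev, inv_inv, mul_assoc]
    rw [h]
    exact inv_mem (show c⁻¹ * x * c ∈ K from hx)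

lemma mem_conjSubfield {K : Subfield D} {c : D} (hc : c ≠ 0) {y : D} :
    y ∈ conjSubfield K c hc ↔ c⁻¹ * y * c ∈ K := Iff.rfl

lemma conj_mem_conjSubfield {K : Subfield D} {c : D} (hc : c ≠ 0) {x : D} (hx : x ∈ K) :
    c * x * c⁻¹ ∈ conjSubfield K c hc := by
  rw [mem_conjSubfield hc]
  have h : c⁻¹ * (c * x * c⁻¹) * c = x := by
    simp [mul_assoc, inv_mul_cancel_left₀ hc, mul_inv_cancel_left₀ hc,
      mul_inv_cancel₀ hc, inv_mul_cancel₀ hc]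
  rwa [h]

lemma conjSubfield_selfInv {K : Subfield D} (hK : IsSelfInvMaxSubfield K)
    {c : D} (hc : c ≠ 0) : IsSelfInvMaxSubfield (conjSubfield K c hc) := by
  obtain ⟨h1, h2, h3⟩ := hK
  refine ⟨?_, ?_, ?_⟩
  · -- commutative
    intro x hx y hy
    rw [mem_conjSubfield hc] at hx hy
    have hab : (c⁻¹ * x * c) * (c⁻¹ * y * c) = (c⁻¹ * y * c) * (c⁻¹ * x * c) :=
      h1 _ hx _ hy
    have := congrArg (fun z => c * z * c⁻¹) hab
    simpa [mul_assoc, inv_mul_cancel_left₀ hc, mul_inv_cancel_left₀ hc,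
      mul_inv_cancel₀ hc, inv_mul_cancel₀ hc] using this
  · -- centralizer
    intro d hd
    rw [mem_conjSubfield hc]
    apply h2
    intro x hx
    have hmem : c * x * c⁻¹ ∈ conjSubfield K c hc := conj_mem_conjSubfield hc hx
    have hcomm := hd _ hmem
    have := congrArg (fun z => c⁻¹ * z * c) hcomm
    simpa [mul_assoc, inv_mul_cancel_left₀ hc, mul_inv_cancel_left₀ hc,
      mul_inv_cancel₀ hc, inv_mul_cancel₀ hc] using this
  · -- normalizer
    intro d
    constructor
    · intro hd
      rcases eq_or_ne d 0 with h0 | h0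
      · exact Or.inl h0
      refine Or.inr ⟨h0, ?_⟩
      intro k hk
      rw [mem_conjSubfield hc] at hd hk
      rw [mem_conjSubfield hc]
      set a := c⁻¹ * d * c with ha
      have haK : a ∈ K := hd
      have ha0 : a ≠ 0 := by
        simp only [ha]
        exact mul_ne_zero (mul_ne_zero (inv_ne_zero hc) h0) hc
      have hnorm : ∀ b ∈ K, a * b * a⁻¹ ∈ K := by
        rcases (h3 a).mp haK with h | h
        · exact absurd h ha0
        · exact h.2
      have key : c⁻¹ * (d * k * d⁻¹) * c = a * (c⁻¹ * k * c) * a⁻¹ := by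
        have hainv : a⁻¹ = c⁻¹ * d⁻¹ * c := by
          rw [ha, mul_inv_rev, mul_inv_rev, inv_inv, mul_assoc]
        rw [hainv, ha]
        simp [mul_assoc, inv_mul_cancel_left₀ hc, mul_inv_cancel_left₀ hc,
          mul_inv_cancel₀ hc, inv_mul_cancel₀ hc]
      rw [key]
      exact hnorm _ hk
    · rintro (h0 | ⟨h0, hnorm⟩)
      · rw [h0]; exact zero_mem _
      rw [mem_conjSubfield hc]
      rw [h3]
      refine Or.inr ⟨mul_ne_zero (mul_ne_zero (inv_ne_zero hc) h0) hc, ?_⟩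
      intro x hx
      have hmem : c * x * c⁻¹ ∈ conjSubfield K c hc := conj_mem_conjSubfield hc hx
      have hd := hnorm _ hmem
      rw [mem_conjSubfield hc] at hd
      have key : c⁻¹ * (d * (c * x * c⁻¹) * d⁻¹) * c
          = (c⁻¹ * d * c) * x * (c⁻¹ * d * c)⁻¹ := by
        rw [mul_inv_rev, mul_inv_rev, inv_inv]
        simp [mul_assoc, inv_mul_cancel_left₀ hc, mul_inv_cancel_left₀ hc,
          mul_inv_cancel₀ hc, inv_mul_cancel₀ hc]
      rwa [key] at hd

lemma conjSubfield_eq_self_iff {K : Subfield D} (hK : IsSelfInvMaxSubfield K)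
    {c : D} (hc : c ≠ 0) : conjSubfield K c hc = K ↔ c ∈ K := by
  constructor
  · intro h
    rw [(hK.2.2 c)]
    refine Or.inr ⟨hc, ?_⟩
    intro k hk
    have := conj_mem_conjSubfield hc hk
    rwa [h] at this
  · intro hcK
    ext y
    rw [mem_conjSubfield hc]
    constructor
    · intro hy
      have : c * (c⁻¹ * y * c) * c⁻¹ ∈ K :=
        mul_mem (mul_mem hcK hy) (inv_mem hcK)
      have heq : c * (c⁻¹ * y * c) * c⁻¹ = y := by
        simp [mul_assoc, inv_mul_cancel_left₀ hc, mul_inv_cancel_left₀ hc,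
          mul_inv_cancel₀ hc, inv_mul_cancel₀ hc]
      rwa [heq] at this
    · intro hy
      exact mul_mem (mul_mem (inv_mem hcK) hy) hcK

end Aux

/-- A noncommutative division ring containing a self-invariant maximal subfield contains
at least three pairwise distinct self-invariant maximal subfields. -/
theorem stmt4 {D : Type*} [DivisionRing D] (hnc : ∃ a b : D, a * b ≠ b * a)
    (K : Subfield D) (hK : IsSelfInvMaxSubfield K) :
    ∃ K₁ K₂ K₃ : Subfield D, K₁ ≠ K₂ ∧ K₁ ≠ K₃ ∧ K₂ ≠ K₃ ∧
      IsSelfInvMaxSubfield K₁ ∧ IsSelfInvMaxSubfield K₂ ∧ IsSelfInvMaxSubfield K₃ := by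
  -- K ≠ ⊤
  obtain ⟨a, b, hab⟩ := hnc
  have hKne : ∃ d : D, d ∉ K := by
    by_contra h
    push_neg at h
    exact hab (hK.1 a (h a) b (h b))
  obtain ⟨d, hd⟩ := hKne
  have hd0 : d ≠ 0 := fun h => hd (h ▸ zero_mem K)
  -- second subfield
  set K₂ := conjSubfield K d hd0 with hK₂def
  have hK₂ne : K₂ ≠ K := fun h => hd ((conjSubfield_eq_self_iff hK hd0).mp h)
  -- third subfield exists
  have hthird : ∃ e : D, ∃ he : e ≠ 0,
      conjSubfield K e he ≠ K ∧ conjSubfield K e he ≠ K₂ := by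
    by_contra h
    push_neg at h
    -- dichotomy: every nonzero e is in K or in d K
    have dich : ∀ e : D, e ≠ 0 → e ∈ K ∨ d⁻¹ * e ∈ K := by
      intro e he
      rcases eq_or_ne (conjSubfield K e he) K with heq | hne
      · exact Or.inl ((conjSubfield_eq_self_iff hK he).mp heq)
      · have heq2 := h e he hne
        right
        rw [hK.2.2]
        refine Or.inr ⟨mul_ne_zero (inv_ne_zero hd0) he, ?_⟩
        intro k hk
        have hk' : e * k * e⁻¹ ∈ conjSubfield K e he := conj_mem_conjSubfield he hk
        rw [heq2, hK₂def, mem_conjSubfield hd0] at hk'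
        have heq3 : (d⁻¹ * e) * k * (d⁻¹ * e)⁻¹ = d⁻¹ * (e * k * e⁻¹) * d := by
          rw [mul_inv_rev, inv_inv]
          simp [mul_assoc]
        rwa [heq3]
    -- claim: every nonzero g ∉ K conjugates K into itself from the left
    have claim : ∀ g : D, g ∉ K → g ≠ 0 → ∀ k ∈ K, g⁻¹ * k * g ∈ K := by
      intro g hg hg0 k hk
      rcases eq_or_ne k 0 with hk0 | hk0
      · rw [hk0, mul_zero, zero_mul]; exact zero_mem K
      have h1 : d⁻¹ * g ∈ K := (dich g hg0).resolve_left hg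
      have hkg : k * g ∉ K := by
        intro hmem
        apply hg
        have : k⁻¹ * (k * g) ∈ K := mul_mem (inv_mem hk) hmem
        rwa [inv_mul_cancel_left₀ hk0] at this
      have h2 : d⁻¹ * (k * g) ∈ K := (dich (k * g) (mul_ne_zero hk0 hg0)).resolve_left hkg
      have h3 : (d⁻¹ * g)⁻¹ * (d⁻¹ * (k * g)) ∈ K := mul_mem (inv_mem h1) h2
      have heq : (d⁻¹ * g)⁻¹ * (d⁻¹ * (k * g)) = g⁻¹ * k * g := by
        rw [mul_inv_rev, inv_inv]
        simp [mul_assoc, inv_mul_cancel_left₀ hd0, mul_inv_cancel_left₀ hd0,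
          mul_inv_cancel₀ hd0, inv_mul_cancel₀ hd0]
      rwa [heq] at h3
    -- apply to g = d⁻¹ : get d normalizes K, so d ∈ K, contradiction
    have hdinv : d⁻¹ ∉ K := fun hmem => hd (by simpa using inv_mem hmem)
    have hfinal : ∀ k ∈ K, d * k * d⁻¹ ∈ K := by
      intro k hk
      have := claim d⁻¹ hdinv (inv_ne_zero hd0) k hk
      rwa [inv_inv] at this
    exact hd ((hK.2.2 d).mpr (Or.inr ⟨hd0, hfinal⟩))
  obtain ⟨e, he, hne1, hne2⟩ := hthird
  refine ⟨K, K₂, conjSubfield K e he, hK₂ne.symm, hne1.symm, hne2.symm, hK,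
    conjSubfield_selfInv hK hd0, conjSubfield_selfInv hK he⟩
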